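/- Let s and R be real numbers with 0 < s < 1 < R, and set c(s,R) = (1 − s²)/(R − s²/R). Then for all complex numbers z, w with |z| ≤ s and |w| ≤ s, one has dist_𝔻(z/R, w/R) ≥ c(s,R) · dist_𝔻(z, w). -/

import Mathlib

open Complex

/-- `2 * artanh x = log ((1+x)/(1-x))`. -/
noncomputable def twoArtanh (x : ℝ) : ℝ := Real.log ((1 + x) / (1 - x))

/-- The hyperbolic distance in the unit disc:
`dist_𝔻(z,w) = 2 * artanh (|z - w| / |1 - conj w * z|)`. -/
noncomputable def hypDistDisc (z w : ℂ) : ℝ :=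
  twoArtanh (‖z - w‖ / ‖1 - (starRingEnd ℂ) w * z‖)

/-- `2u ≤ log ((1+u)/(1-u))` for `0 ≤ u < 1`. -/
lemma two_mul_le_log_ratio {u : ℝ} (h0 : 0 ≤ u) (h1 : u < 1) :
    2 * u ≤ Real.log ((1 + u) / (1 - u)) := by
  set k : ℝ → ℝ := fun y => Real.log (1 + y) - Real.log (1 - y) - 2 * y with hk
  have hder : ∀ x ∈ Set.Icc (0:ℝ) u,
      HasDerivAt k (1 / (1 + x) - -1 / (1 - x) - 2) x := by
    intro x hx
    have hx1 : (0:ℝ) < 1 + x := by nlinarith [hx.1]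
    have hx2 : (0:ℝ) < 1 - x := by nlinarith [hx.2]
    have d1 : HasDerivAt (fun y : ℝ => Real.log (1 + y)) (1 / (1 + x)) x := by
      have := (((hasDerivAt_id x).const_add (1:ℝ)).log (ne_of_gt hx1))
      simpa using this
    have d2 : HasDerivAt (fun y : ℝ => Real.log (1 - y)) (-1 / (1 - x)) x := by
      have := (((hasDerivAt_id x).const_sub (1:ℝ)).log (ne_of_gt hx2))
      simpa using this
    have d3 : HasDerivAt (fun y : ℝ => 2 * y) 2 x := by
      simpa using (hasDerivAt_id x).const_mul (2:ℝ)
    exact (d1.sub d2).sub d3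
  have hmono : MonotoneOn k (Set.Icc 0 u) := by
    apply monotoneOn_of_deriv_nonneg (convex_Icc 0 u)
    · exact fun x hx => (hder x hx).continuousAt.continuousWithinAt
    · rw [interior_Icc]
      exact fun x hx => ((hder x (Set.Ioo_subset_Icc_self hx)).differentiableAt).differentiableWithinAt
    · intro x hx
      rw [interior_Icc] at hx
      rw [(hder x (Set.Ioo_subset_Icc_self hx)).deriv]
      have hx1 : (0:ℝ) < 1 + x := by nlinarith [hx.1]
      have hx2 : (0:ℝ) < 1 - x := by nlinarith [hx.2, h1]
      have : 1 / (1 + x) - -1 / (1 - x) - 2 = 2 * x ^ 2 / ((1 + x) * (1 - x)) := by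
        field_simp
        try ring
      rw [this]
      positivity
  have h01 : (0:ℝ) ∈ Set.Icc (0:ℝ) u := ⟨le_refl 0, h0⟩
  have hu1 : u ∈ Set.Icc (0:ℝ) u := ⟨h0, le_refl u⟩
  have hmu := hmono h01 hu1 h0
  have hk0 : k 0 = 0 := by simp [hk]
  have hku : k u = Real.log (1 + u) - Real.log (1 - u) - 2 * u := rfl
  rw [Real.log_div (ne_of_gt (by linarith : (0:ℝ) < 1 + u))
    (ne_of_gt (by linarith : (0:ℝ) < 1 - u))]
  rw [hk0, hku] at hmu
  linarith

/-- Auxiliary function: `R² |1 - a/R²|²` written in real variables. -/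
noncomputable def qFun (α m x : ℝ) : ℝ := x ^ 2 - 2 * α + m ^ 2 / x ^ 2

/-- Auxiliary function whose monotonicity encodes the key inequality. -/
noncomputable def psiFun (s e α m x : ℝ) : ℝ :=
  (Real.log (Real.sqrt (qFun α m x) + e) - Real.log (Real.sqrt (qFun α m x) - e)) *
    (x - s ^ 2 / x)

set_option maxHeartbeats 2000000 in
/-- The key real-variable inequality. -/
lemma key_real (s R e α m p r : ℝ) (hs0 : 0 < s) (hs1 : s < 1) (hR : 1 < R)
    (hp0 : 0 ≤ p) (hps : p ≤ s) (hr0 : 0 ≤ r) (hrs : r ≤ s) (hm : m = p * r)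
    (he0 : 0 ≤ e) (he2 : e ^ 2 = p ^ 2 + r ^ 2 - 2 * α) :
    twoArtanh (e / Real.sqrt (R ^ 2 - 2 * α + m ^ 2 / R ^ 2)) * (R - s ^ 2 / R) ≥
      twoArtanh (e / Real.sqrt (1 - 2 * α + m ^ 2)) * (1 - s ^ 2) := by
  have hQR : R ^ 2 - 2 * α + m ^ 2 / R ^ 2 = qFun α m R := rfl
  have hQ1 : 1 - 2 * α + m ^ 2 = qFun α m 1 := by simp [qFun]
  rw [hQR, hQ1]
  -- basic facts about qFun on [1, ∞)
  have hQsub : ∀ x : ℝ, 1 ≤ x →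
      qFun α m x - e ^ 2 = (x ^ 2 - p ^ 2) * (x ^ 2 - r ^ 2) / x ^ 2 := by
    intro x hx
    have hx0 : x ≠ 0 := by positivity
    rw [qFun, he2, hm]
    field_simp
    ring
  have hQegt : ∀ x : ℝ, 1 ≤ x → e ^ 2 < qFun α m x := by
    intro x hx
    have h := hQsub x hx
    have hx0 : (0:ℝ) < x ^ 2 := by positivity
    have h1 : 0 < x ^ 2 - p ^ 2 := by nlinarith
    have h2 : 0 < x ^ 2 - r ^ 2 := by nlinarith
    have h3 := div_pos (mul_pos h1 h2) hx0
    linarith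
  have hQpos : ∀ x : ℝ, 1 ≤ x → 0 < qFun α m x := fun x hx =>
    lt_of_le_of_lt (by positivity) (hQegt x hx)
  have hlt : ∀ x : ℝ, 1 ≤ x → e < Real.sqrt (qFun α m x) := by
    intro x hx
    have h1 : e ^ 2 < qFun α m x := hQegt x hx
    have h2 : Real.sqrt (qFun α m x) ^ 2 = qFun α m x := Real.sq_sqrt (hQpos x hx).le
    nlinarith [Real.sqrt_nonneg (qFun α m x)]
  rcases eq_or_lt_of_le he0 with h | hepos
  · rw [← h]
    simp [twoArtanh]
  have hrw : ∀ x : ℝ, 1 ≤ x →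
      twoArtanh (e / Real.sqrt (qFun α m x)) * (x - s ^ 2 / x) = psiFun s e α m x := by
    intro x hx
    have ht0 : 0 < Real.sqrt (qFun α m x) := Real.sqrt_pos.2 (hQpos x hx)
    have hte : e < Real.sqrt (qFun α m x) := hlt x hx
    set t := Real.sqrt (qFun α m x)
    have ht' : t ≠ 0 := ht0.ne'
    have h2 : t - e ≠ 0 := ne_of_gt (by linarith)
    have hden : (1:ℝ) - e / t ≠ 0 := by
      have hrw2 : (1:ℝ) - e / t = (t - e) / t := by field_simp
      rw [hrw2]
      exact div_ne_zero h2 ht'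
    have h1 : (1 + e / t) / (1 - e / t) = (t + e) / (t - e) := by
      rw [div_eq_div_iff hden h2]
      field_simp
      try ring
    rw [psiFun, twoArtanh, h1,
      Real.log_div (ne_of_gt (by linarith : (0:ℝ) < t + e)) h2]
  -- derivative of psiFun
  have hder : ∀ x : ℝ, 1 ≤ x → HasDerivAt (psiFun s e α m)
      (((2 * x - 2 * m ^ 2 / x ^ 3) / (2 * Real.sqrt (qFun α m x)) / (Real.sqrt (qFun α m x) + e) -
        (2 * x - 2 * m ^ 2 / x ^ 3) / (2 * Real.sqrt (qFun α m x)) / (Real.sqrt (qFun α m x) - e)) *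
          (x - s ^ 2 / x) +
        (Real.log (Real.sqrt (qFun α m x) + e) - Real.log (Real.sqrt (qFun α m x) - e)) *
          (1 + s ^ 2 / x ^ 2))
      x := by
    intro x hx
    have hx0 : (0:ℝ) < x := by linarith
    have hx0' : x ≠ 0 := ne_of_gt hx0
    have hQp : 0 < qFun α m x := hQpos x hx
    have ht0 : 0 < Real.sqrt (qFun α m x) := Real.sqrt_pos.2 hQp
    have hte : e < Real.sqrt (qFun α m x) := hlt x hx
    have ha : HasDerivAt (fun y : ℝ => y ^ 2) (2 * x) x := by
      simpa using hasDerivAt_pow 2 x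
    have hb : HasDerivAt (fun y : ℝ => m ^ 2 / y ^ 2)
        ((0 * x ^ 2 - m ^ 2 * (2 * x)) / (x ^ 2) ^ 2) x :=
      (hasDerivAt_const x (m ^ 2)).div ha (pow_ne_zero 2 hx0')
    have hq : HasDerivAt (qFun α m) (2 * x - 2 * m ^ 2 / x ^ 3) x := by
      have h := (ha.sub_const (2 * α)).add hb
      refine h.congr_deriv ?_
      field_simp
      try ring
    have hsq : HasDerivAt (fun y => Real.sqrt (qFun α m y))
        ((2 * x - 2 * m ^ 2 / x ^ 3) / (2 * Real.sqrt (qFun α m x))) x := hq.sqrt (ne_of_gt hQp)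
    have hlog1 : HasDerivAt (fun y => Real.log (Real.sqrt (qFun α m y) + e))
        ((2 * x - 2 * m ^ 2 / x ^ 3) / (2 * Real.sqrt (qFun α m x)) /
          (Real.sqrt (qFun α m x) + e)) x :=
      (hsq.add_const e).log (ne_of_gt (by linarith : (0:ℝ) < Real.sqrt (qFun α m x) + e))
    have hlog2 : HasDerivAt (fun y => Real.log (Real.sqrt (qFun α m y) - e))
        ((2 * x - 2 * m ^ 2 / x ^ 3) / (2 * Real.sqrt (qFun α m x)) /
          (Real.sqrt (qFun α m x) - e)) x :=
      (hsq.sub_const e).log (ne_of_gt (by linarith : (0:ℝ) < Real.sqrt (qFun α m x) - e))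
    have hfac : HasDerivAt (fun y : ℝ => y - s ^ 2 / y) (1 + s ^ 2 / x ^ 2) x := by
      have h := (hasDerivAt_id x).sub
        ((hasDerivAt_const x (s ^ 2)).div (hasDerivAt_id x) hx0')
      refine h.congr_deriv ?_
      simp only [id]
      field_simp
      try ring
    exact (hlog1.sub hlog2).mul hfac
  -- the derivative is nonnegative
  have hnn : ∀ x : ℝ, 1 ≤ x →
      0 ≤ ((2 * x - 2 * m ^ 2 / x ^ 3) / (2 * Real.sqrt (qFun α m x)) / (Real.sqrt (qFun α m x) + e) -
        (2 * x - 2 * m ^ 2 / x ^ 3) / (2 * Real.sqrt (qFun α m x)) / (Real.sqrt (qFun α m x) - e)) *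
          (x - s ^ 2 / x) +
        (Real.log (Real.sqrt (qFun α m x) + e) - Real.log (Real.sqrt (qFun α m x) - e)) *
          (1 + s ^ 2 / x ^ 2) := by
    intro x hx
    have hx0 : (0:ℝ) < x := by linarith
    have hx0' : x ≠ 0 := ne_of_gt hx0
    have hQp : 0 < qFun α m x := hQpos x hx
    have ht0 : 0 < Real.sqrt (qFun α m x) := Real.sqrt_pos.2 hQp
    have hte : e < Real.sqrt (qFun α m x) := hlt x hx
    have hsub0 : Real.sqrt (qFun α m x) ^ 2 - e ^ 2 =
        (x ^ 2 - p ^ 2) * (x ^ 2 - r ^ 2) / x ^ 2 := by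
      rw [Real.sq_sqrt hQp.le]
      exact hQsub x hx
    set t := Real.sqrt (qFun α m x) with htdef
    have ht' : t ≠ 0 := ht0.ne'
    set d := 2 * x - 2 * m ^ 2 / x ^ 3 with hddef
    have hte' : t - e ≠ 0 := ne_of_gt (by linarith)
    have htep : (0:ℝ) < t + e := by linarith
    have hte2 : 0 < t ^ 2 - e ^ 2 := by nlinarith
    have hne2 : t ^ 2 - e ^ 2 ≠ 0 := ne_of_gt hte2
    -- lower bound on the log term
    have hL : 2 * (e / t) ≤ Real.log (t + e) - Real.log (t - e) := by
      have hu0 : 0 ≤ e / t := div_nonneg he0 ht0.le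
      have hu1 : e / t < 1 := (div_lt_one ht0).2 hte
      have hlog := two_mul_le_log_ratio hu0 hu1
      have hden : (1:ℝ) - e / t ≠ 0 := by
        have hrw2 : (1:ℝ) - e / t = (t - e) / t := by field_simp
        rw [hrw2]
        exact div_ne_zero hte' ht'
      have hrat : (1 + e / t) / (1 - e / t) = (t + e) / (t - e) := by
        rw [div_eq_div_iff hden hte']
        field_simp
        try ring
      rw [hrat, Real.log_div (ne_of_gt htep) hte'] at hlog
      exact hlog
    -- rewrite the first bracket
    have hA : d / (2 * t) / (t + e) - d / (2 * t) / (t - e)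
        = -(e * d) / (t * (t ^ 2 - e ^ 2)) := by
      have h1 : t + e ≠ 0 := ne_of_gt htep
      field_simp
      try ring
    rw [hA]
    -- core polynomial inequality
    have hpoly : (2 * x ^ 4 - 2 * (p * r) ^ 2) * (x ^ 2 - s ^ 2) ≤
        2 * (x ^ 2 + s ^ 2) * ((x ^ 2 - p ^ 2) * (x ^ 2 - r ^ 2)) := by
      have h1 : 0 ≤ (2 * s ^ 2 - p ^ 2 - r ^ 2) * (x ^ 2 - 1) := by
        apply mul_nonneg <;> nlinarith
      have h2 : 0 ≤ (s ^ 2 - p ^ 2) * (1 - r ^ 2) := by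
        apply mul_nonneg <;> nlinarith
      have h3 : 0 ≤ (s ^ 2 - r ^ 2) * (1 - p ^ 2) := by
        apply mul_nonneg <;> nlinarith
      nlinarith [mul_nonneg (sq_nonneg x) h1, mul_nonneg (sq_nonneg x) h2,
        mul_nonneg (sq_nonneg x) h3]
    have hcore : d * (x - s ^ 2 / x) / (t ^ 2 - e ^ 2) ≤ 2 * (1 + s ^ 2 / x ^ 2) := by
      rw [div_le_iff₀ hte2, hsub0, hddef]
      have e1 : (2 * x - 2 * m ^ 2 / x ^ 3) * (x - s ^ 2 / x) =
          (2 * x ^ 4 - 2 * (p * r) ^ 2) * (x ^ 2 - s ^ 2) / x ^ 4 := by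
        rw [hm]
        field_simp
      have e2 : 2 * (1 + s ^ 2 / x ^ 2) * ((x ^ 2 - p ^ 2) * (x ^ 2 - r ^ 2) / x ^ 2) =
          2 * (x ^ 2 + s ^ 2) * ((x ^ 2 - p ^ 2) * (x ^ 2 - r ^ 2)) / x ^ 4 := by
        rw [eq_div_iff (by positivity : (x:ℝ) ^ 4 ≠ 0)]
        field_simp
      rw [e1, e2]
      gcongr
    -- put things together
    have hLHSeq : -(e * d) / (t * (t ^ 2 - e ^ 2)) * (x - s ^ 2 / x)
        = -((e / t) * (d * (x - s ^ 2 / x) / (t ^ 2 - e ^ 2))) := by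
      field_simp
      try ring
    rw [hLHSeq]
    have hfacpos : (0:ℝ) < 1 + s ^ 2 / x ^ 2 := by positivity
    have h5 : (e / t) * (d * (x - s ^ 2 / x) / (t ^ 2 - e ^ 2)) ≤
        (e / t) * (2 * (1 + s ^ 2 / x ^ 2)) :=
      mul_le_mul_of_nonneg_left hcore (div_nonneg he0 ht0.le)
    have h6 : 2 * (e / t) * (1 + s ^ 2 / x ^ 2) ≤
        (Real.log (t + e) - Real.log (t - e)) * (1 + s ^ 2 / x ^ 2) :=
      mul_le_mul_of_nonneg_right hL hfacpos.le
    nlinarith [h5, h6]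
  -- monotonicity
  have hmono : MonotoneOn (psiFun s e α m) (Set.Icc 1 R) := by
    apply monotoneOn_of_deriv_nonneg (convex_Icc 1 R)
    · exact fun x hx => (hder x hx.1).continuousAt.continuousWithinAt
    · rw [interior_Icc]
      exact fun x hx => ((hder x hx.1.le).differentiableAt).differentiableWithinAt
    · intro x hx
      rw [interior_Icc] at hx
      rw [(hder x hx.1.le).deriv]
      exact hnn x hx.1.le
  have hfin : psiFun s e α m 1 ≤ psiFun s e α m R :=
    hmono ⟨le_refl 1, hR.le⟩ ⟨hR.le, le_refl R⟩ hR.le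
  rw [ge_iff_le, hrw R hR.le]
  have h1 : twoArtanh (e / Real.sqrt (qFun α m 1)) * (1 - s ^ 2) = psiFun s e α m 1 := by
    rw [← hrw 1 (le_refl 1)]
    norm_num
  rw [h1]
  exact hfin

/-- Hyperbolic distances shrink by at most the factor `c(s,R) = (1-s²)/(R - s²/R)`
when points of modulus at most `s < 1` are scaled down by `R > 1`. -/
theorem hypDist_scale_down_lower_bound
    (s R : ℝ) (hs0 : 0 < s) (hs1 : s < 1) (hR : 1 < R)
    (z w : ℂ) (hz : ‖z‖ ≤ s) (hw : ‖w‖ ≤ s) :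
    hypDistDisc (z / R) (w / R) ≥ ((1 - s ^ 2) / (R - s ^ 2 / R)) * hypDistDisc z w := by
  have hR0 : (0:ℝ) < R := by linarith
  have hRne : (R:ℂ) ≠ 0 := by exact_mod_cast ne_of_gt hR0
  set p := ‖z‖ with hp
  set r := ‖w‖ with hr
  set a := (starRingEnd ℂ) w * z with ha
  set α := a.re with hα
  set m := p * r with hmdef
  set e := ‖z - w‖ with he
  have habs_a : ‖a‖ = m := by
    rw [ha, norm_mul, Complex.norm_conj, hmdef, hp, hr]
    ring
  have he2 : e ^ 2 = p ^ 2 + r ^ 2 - 2 * α := by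
    rw [he, Complex.sq_norm, Complex.normSq_sub, Complex.normSq_eq_norm_sq, Complex.normSq_eq_norm_sq,
      ← hp, ← hr, hα, ha, mul_comm z ((starRingEnd ℂ) w)]
    try ring
  have habs1 : ‖1 - a‖ = Real.sqrt (1 - 2 * α + m ^ 2) := by
    rw [Complex.norm_def]
    congr 1
    rw [Complex.normSq_sub]
    simp only [map_one, one_mul, Complex.conj_re, Complex.normSq_eq_norm_sq, habs_a, ← hα]
    ring
  have hconj : (starRingEnd ℂ) (w / (R:ℂ)) * (z / (R:ℂ)) = a / ((R^2 : ℝ) : ℂ) := by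
    rw [map_div₀, Complex.conj_ofReal, ha, div_mul_div_comm]
    push_cast
    ring
  have hdiv_re : (a / ((R^2 : ℝ) : ℂ)).re = α / R ^ 2 := by
    rw [Complex.div_ofReal_re, hα]
  have hdiv_abs : ‖a / ((R^2 : ℝ) : ℂ)‖ = m / R ^ 2 := by
    rw [norm_div, habs_a, Complex.norm_real, Real.norm_of_nonneg (by positivity)]
  have habs2 : ‖1 - a / ((R^2 : ℝ) : ℂ)‖ =
      Real.sqrt (1 - 2 * α / R ^ 2 + m ^ 2 / R ^ 4) := by
    rw [Complex.norm_def]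
    congr 1
    rw [Complex.normSq_sub]
    simp only [map_one, one_mul, Complex.conj_re, Complex.normSq_eq_norm_sq, hdiv_abs, hdiv_re]
    field_simp
    try ring
  have habs3 : ‖z / (R:ℂ) - w / (R:ℂ)‖ = e / R := by
    rw [div_sub_div_same, norm_div, Complex.norm_real, Real.norm_of_nonneg hR0.le, he]
  -- rewrite the scaled hyperbolic distance
  have hsqrtR : Real.sqrt (R ^ 2 - 2 * α + m ^ 2 / R ^ 2) =
      R * Real.sqrt (1 - 2 * α / R ^ 2 + m ^ 2 / R ^ 4) := by
    rw [show R ^ 2 - 2 * α + m ^ 2 / R ^ 2 = R ^ 2 * (1 - 2 * α / R ^ 2 + m ^ 2 / R ^ 4) by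
      field_simp; try ring, Real.sqrt_mul (sq_nonneg R), Real.sqrt_sq hR0.le]
  have hlhs : hypDistDisc (z / R) (w / R) =
      twoArtanh (e / Real.sqrt (R ^ 2 - 2 * α + m ^ 2 / R ^ 2)) := by
    rw [hypDistDisc, hconj, habs3, habs2, hsqrtR, div_div]
  have hrhs : hypDistDisc z w = twoArtanh (e / Real.sqrt (1 - 2 * α + m ^ 2)) := by
    rw [hypDistDisc, ← ha, ← he, habs1]
  have key := key_real s R e α m p r hs0 hs1 hR (norm_nonneg z) hz
    (norm_nonneg w) hw rfl (norm_nonneg _) he2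
  have hden : 0 < R - s ^ 2 / R := by
    rw [sub_pos, div_lt_iff₀ hR0]
    nlinarith
  rw [hlhs, hrhs, ge_iff_le, div_mul_eq_mul_div, div_le_iff₀ hden]
  linarith [key]
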